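/- Linear convergence of the L-scheme fixed point iteration: let b : ℝ → ℝ be nondecreasing and Lipschitz with constant L_b, and let L ≥ L_b. Define the scalar iteration map arising from the L-scheme, T(p) = p − (L + CΔt)⁻¹ (b(p) − g + CΔt·p) for constants C, Δt > 0 and data g (with b(p*) + CΔt p* = g at the fixed point p*). Then T is a contraction with contraction factor at most (L)/(L + CΔt) < 1, hence the iteration p^{(i)} = T(p^{(i-1)}) converges to p* for any initial guess. -/
import Mathlib


/-- The scalar L-scheme iteration map `T(p) = p − (L + CΔt)⁻¹ (b(p) + CΔt·p − g)`. -/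
noncomputable def Tmap (b : ℝ → ℝ) (L C Δt g : ℝ) : ℝ → ℝ :=
  fun p => p - (L + C * Δt)⁻¹ * (b p + C * Δt * p - g)

/-- Linear convergence of the L-scheme: if `b` is nondecreasing and Lipschitz with
constant `L_b ≤ L`, then `T` is a contraction with factor at most `L/(L + CΔt) < 1`,
and the iteration converges to the fixed point `p*` from any initial guess. -/
theorem stmt6 (b : ℝ → ℝ) (Lb L C Δt g pstar : ℝ)
    (hmono : Monotone b) (hlip : ∀ x y : ℝ, |b x - b y| ≤ Lb * |x - y|)
    (hLb : Lb ≤ L) (hC : 0 < C) (hΔt : 0 < Δt)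
    (hfix : b pstar + C * Δt * pstar = g) :
    (∀ p q : ℝ, |Tmap b L C Δt g p - Tmap b L C Δt g q| ≤ (L / (L + C * Δt)) * |p - q|) ∧
    L / (L + C * Δt) < 1 ∧
    ∀ p0 : ℝ, Filter.Tendsto (fun i => (Tmap b L C Δt g)^[i] p0) Filter.atTop (nhds pstar) := by
  have hLb0 : 0 ≤ Lb := by
    have h := hlip 0 1
    simp at h
    exact le_trans (abs_nonneg _) h
  have hL0 : 0 ≤ L := le_trans hLb0 hLb
  have hCΔ : 0 < C * Δt := mul_pos hC hΔt
  have hden : 0 < L + C * Δt := by linarith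
  -- The contraction estimate
  have key : ∀ p q : ℝ, q ≤ p →
      |Tmap b L C Δt g p - Tmap b L C Δt g q| ≤ (L / (L + C * Δt)) * |p - q| := by
    intro p q hqp
    have hb : b q ≤ b p := hmono hqp
    have hlip' : b p - b q ≤ L * (p - q) := by
      have h := hlip p q
      rw [abs_of_nonneg (by linarith), abs_of_nonneg (by linarith)] at h
      nlinarith
    have heq : Tmap b L C Δt g p - Tmap b L C Δt g q
        = (L + C * Δt)⁻¹ * (L * (p - q) - (b p - b q)) := by
      simp only [Tmap]
      field_simp
      ring
    rw [heq, abs_mul, abs_of_nonneg (le_of_lt (inv_pos.mpr hden)),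
      abs_of_nonneg (by linarith : (0:ℝ) ≤ p - q)]
    have habs : |L * (p - q) - (b p - b q)| ≤ L * (p - q) := by
      rw [abs_le]
      constructor <;> nlinarith
    calc (L + C * Δt)⁻¹ * |L * (p - q) - (b p - b q)|
        ≤ (L + C * Δt)⁻¹ * (L * (p - q)) := by
          exact mul_le_mul_of_nonneg_left habs (le_of_lt (inv_pos.mpr hden))
      _ = L / (L + C * Δt) * (p - q) := by field_simp
  have hcontr : ∀ p q : ℝ, |Tmap b L C Δt g p - Tmap b L C Δt g q|
      ≤ (L / (L + C * Δt)) * |p - q| := by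
    intro p q
    rcases le_total q p with h | h
    · exact key p q h
    · rw [abs_sub_comm, abs_sub_comm p q]
      exact key q p h
  have hk1 : L / (L + C * Δt) < 1 := (div_lt_one hden).mpr (by linarith)
  refine ⟨hcontr, hk1, ?_⟩
  intro p0
  set k := L / (L + C * Δt) with hk
  have hk0 : 0 ≤ k := div_nonneg hL0 (le_of_lt hden)
  have hfixT : Tmap b L C Δt g pstar = pstar := by
    simp only [Tmap]
    rw [hfix]
    simp
  have hbound : ∀ i : ℕ, |(Tmap b L C Δt g)^[i] p0 - pstar| ≤ k ^ i * |p0 - pstar| := by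
    intro i
    induction i with
    | zero => simp
    | succ n ih =>
      rw [Function.iterate_succ_apply']
      calc |Tmap b L C Δt g ((Tmap b L C Δt g)^[n] p0) - pstar|
          = |Tmap b L C Δt g ((Tmap b L C Δt g)^[n] p0) - Tmap b L C Δt g pstar| := by
            rw [hfixT]
        _ ≤ k * |(Tmap b L C Δt g)^[n] p0 - pstar| := hcontr _ _
        _ ≤ k * (k ^ n * |p0 - pstar|) := mul_le_mul_of_nonneg_left ih hk0
        _ = k ^ (n + 1) * |p0 - pstar| := by ring
  rw [tendsto_iff_dist_tendsto_zero]
  have hlim : Filter.Tendsto (fun i : ℕ => k ^ i * |p0 - pstar|) Filter.atTop (nhds 0) := by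
    simpa using (tendsto_pow_atTop_nhds_zero_of_lt_one hk0 hk1).mul_const |p0 - pstar|
  refine squeeze_zero (fun i => dist_nonneg) (fun i => ?_) hlim
  rw [Real.dist_eq]
  exact hbound i
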